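/- There is a length-preserving bijection ψ between Łukasiewicz paths with no flat step at positive height and Motzkin paths, defined recursively by ψ(ε) = ε, ψ(FL) = Fψ(L), and ψ(U_k L₁ D L₂ D ... L_k D L) = U ψ(L₁) F ψ(L₂) F ... ψ(L_k) D ψ(L). -/

import Mathlib

/-- A Łukasiewicz path: vertical step components, each `≥ -1`, all partial sums
nonnegative, total sum `0`. -/
def IsLukas (w : List ℤ) : Prop :=
  (∀ s ∈ w, -1 ≤ s) ∧ (∀ k, 0 ≤ (w.take k).sum) ∧ w.sum = 0

/-- A Motzkin path: a Łukasiewicz path using only steps `(1,1)`, `(1,0)`, `(1,-1)`. -/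
def IsMotzkin (w : List ℤ) : Prop :=
  IsLukas w ∧ ∀ s ∈ w, s ≤ 1

/-- No flat step at positive height: every flat step starts at ordinate `0`. -/
def NoFlatAtPosHeight (w : List ℤ) : Prop :=
  ∀ j : ℕ, w[j]? = some 0 → (w.take j).sum = 0

namespace PsiAux

def step (st : List ℤ) (s : ℤ) : List ℤ :=
  if s = 0 then st
  else if 1 ≤ s then s :: st
  else
    match st with
    | [] => []
    | c :: st' => if c ≤ 1 then st' else (c - 1) :: st'

def out (st : List ℤ) (s : ℤ) : ℤ :=
  if s = 0 then 0
  else if 1 ≤ s then 1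
  else
    match st with
    | [] => -1
    | c :: _ => if c ≤ 1 then -1 else 0

def run (st : List ℤ) : List ℤ → List ℤ
  | [] => []
  | s :: w => out st s :: run (step st s) w

def stepRev (st : List ℤ) (t : ℤ) : List ℤ :=
  if t = 0 then
    match st with
    | [] => []
    | c :: st' => (c + 1) :: st'
  else if 1 ≤ t then st.tail
  else 1 :: st

def outRev (st : List ℤ) (t : ℤ) : ℤ :=
  if t = 0 then (match st with | [] => 0 | _ :: _ => -1)
  else if 1 ≤ t then st.headI
  else -1

def runRev (st : List ℤ) : List ℤ → List ℤ
  | [] => []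
  | t :: m => outRev st t :: runRev (stepRev st t) m

@[simp] lemma run_nil (st : List ℤ) : run st [] = [] := rfl
@[simp] lemma run_cons (st : List ℤ) (s : ℤ) (w : List ℤ) :
    run st (s :: w) = out st s :: run (step st s) w := rfl
@[simp] lemma runRev_nil (st : List ℤ) : runRev st [] = [] := rfl
@[simp] lemma runRev_cons (st : List ℤ) (t : ℤ) (m : List ℤ) :
    runRev st (t :: m) = outRev st t :: runRev (stepRev st t) m := rfl

lemma run_length (w : List ℤ) : ∀ st, (run st w).length = w.length := by
  induction w with
  | nil => intro st; rfl
  | cons s w ih => intro st; simp [ih]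

lemma runRev_length (m : List ℤ) : ∀ st, (runRev st m).length = m.length := by
  induction m with
  | nil => intro st; rfl
  | cons t m ih => intro st; simp [ih]

lemma run_append (a : List ℤ) : ∀ (st b : List ℤ),
    run st (a ++ b) = run st a ++ run (a.foldl step st) b := by
  induction a with
  | nil => intro st b; rfl
  | cons s a ih => intro st b; simp [ih]

lemma runRev_append (a : List ℤ) : ∀ (st b : List ℤ),
    runRev st (a ++ b) = runRev st a ++ runRev (a.foldl stepRev st) b := by
  induction a with
  | nil => intro st b; rfl
  | cons t a ih => intro st b; simp [ih]

lemma stack_nil (st : List ℤ) (h1 : ∀ c ∈ st, (1:ℤ) ≤ c) (h2 : st.sum = 0) : st = [] := by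
  by_contra hne
  have := List.sum_pos st (fun a ha => lt_of_lt_of_le one_pos (h1 a ha)) hne
  omega

lemma stack_sum_nonneg (st : List ℤ) (h1 : ∀ c ∈ st, (1:ℤ) ≤ c) : 0 ≤ st.sum :=
  List.sum_nonneg (fun a ha => le_trans zero_le_one (h1 a ha))

/-- Composition lemma: a balanced segment `M` (relative to its own stack `σ`)
is processed independently of the rest of the stack and the rest of the input. -/
lemma run_append_closed (M : List ℤ) : ∀ (σ st rest : List ℤ),
    (∀ s ∈ M, -1 ≤ s) → (∀ c ∈ σ, 1 ≤ c) →
    (∀ j, 0 ≤ σ.sum + (M.take j).sum) → σ.sum + M.sum = 0 →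
    run (σ ++ st) (M ++ rest) = run σ M ++ run st rest := by
  induction M with
  | nil =>
    intro σ st rest _ h2 _ h4
    have : σ = [] := stack_nil σ h2 (by simpa using h4)
    subst this; rfl
  | cons s M ih =>
    intro σ st rest h1 h2 h3 h4
    have hs : -1 ≤ s := h1 s (by simp)
    rcases eq_or_lt_of_le hs with hneg | hpos
    · -- s = -1
      have hσ : 1 ≤ σ.sum := by
        have := h3 1
        simp [← hneg] at this
        omega
      obtain ⟨c, σ', rfl⟩ : ∃ c σ', σ = c :: σ' := by
        cases σ with
        | nil => simp at hσ
        | cons c σ' => exact ⟨c, σ', rfl⟩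
      have hc : 1 ≤ c := h2 c (by simp)
      have hσsum : (c :: σ').sum = c + σ'.sum := by simp
      have hMsum : (s :: M).sum = s + M.sum := by simp
      by_cases hc1 : c ≤ 1
      · -- c = 1 : pop
        have hout : out (c :: (σ' ++ st)) s = -1 := by
          simp [out, ← hneg, hc1]
        have hout' : out (c :: σ') s = -1 := by
          simp [out, ← hneg, hc1]
        have hstep : step (c :: (σ' ++ st)) s = σ' ++ st := by
          simp [step, ← hneg, hc1]
        have hstep' : step (c :: σ') s = σ' := by
          simp [step, ← hneg, hc1]
        simp only [List.cons_append, List.cons_append, run_cons, hout, hout', hstep, hstep']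
        rw [ih σ' st rest (fun x hx => h1 x (by simp [hx]))
          (fun x hx => h2 x (by simp [hx]))
          (fun j => by have := h3 (j + 1); simp [List.take_succ_cons, ← hneg] at this ⊢; omega)
          (by simp [← hneg] at h4 ⊢; omega)]
      · -- c ≥ 2 : decrement
        have hout : out (c :: (σ' ++ st)) s = 0 := by
          simp [out, ← hneg, hc1]
        have hout' : out (c :: σ') s = 0 := by
          simp [out, ← hneg, hc1]
        have hstep : step (c :: (σ' ++ st)) s = (c - 1) :: (σ' ++ st) := by
          simp [step, ← hneg, hc1]
        have hstep' : step (c :: σ') s = (c - 1) :: σ' := by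
          simp [step, ← hneg, hc1]
        simp only [List.cons_append, run_cons, hout, hout', hstep, hstep']
        rw [show (c-1) :: (σ' ++ st) = ((c-1) :: σ') ++ st by simp,
          ih ((c - 1) :: σ') st rest (fun x hx => h1 x (by simp [hx]))
          (by
            intro x hx
            simp only [List.mem_cons] at hx
            rcases hx with rfl | hx
            · omega
            · exact h2 x (by simp [hx]))
          (fun j => by have := h3 (j + 1); simp [List.take_succ_cons, ← hneg] at this ⊢; omega)
          (by simp [← hneg] at h4 ⊢; omega)]
    · rcases eq_or_lt_of_le (show (0:ℤ) ≤ s by omega) with h0 | h1'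
      · -- s = 0
        have hout : ∀ τ : List ℤ, out τ s = 0 := by intro τ; simp [out, ← h0]
        have hstep : ∀ τ : List ℤ, step τ s = τ := by intro τ; simp [step, ← h0]
        simp only [List.cons_append, run_cons, hout, hstep]
        rw [ih σ st rest (fun x hx => h1 x (by simp [hx])) h2
          (fun j => by have := h3 (j + 1); simp [List.take_succ_cons, ← h0] at this ⊢; omega)
          (by simp [← h0] at h4 ⊢; omega)]
      · -- s ≥ 1
        have hs1 : 1 ≤ s := h1'
        have hout : ∀ τ : List ℤ, out τ s = 1 := by
          intro τ; simp [out, hs1]; omega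
        have hstep : ∀ τ : List ℤ, step τ s = s :: τ := by
          intro τ; simp [step, hs1]; omega
        simp only [List.cons_append, run_cons, hout, hstep]
        rw [show s :: (σ ++ st) = (s :: σ) ++ st by simp,
          ih (s :: σ) st rest (fun x hx => h1 x (by simp [hx]))
          (by
            intro x hx
            simp only [List.mem_cons] at hx
            rcases hx with rfl | hx
            · omega
            · exact h2 x (by simp [hx]))
          (fun j => by have := h3 (j + 1); simp [List.take_succ_cons] at this ⊢; omega)
          (by simp at h4 ⊢; omega)]

end PsiAux

namespace PsiAux

/-- Forward invariant: the output of `run` is a Motzkin path (relative to the stack). -/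
lemma run_motzkin (w : List ℤ) : ∀ (st : List ℤ),
    (∀ s ∈ w, -1 ≤ s) → (∀ c ∈ st, 1 ≤ c) →
    (∀ j, 0 ≤ st.sum + (w.take j).sum) → st.sum + w.sum = 0 →
    (∀ t ∈ run st w, -1 ≤ t ∧ t ≤ 1) ∧
      (∀ j, -(st.length : ℤ) ≤ ((run st w).take j).sum) ∧
      (run st w).sum = -(st.length : ℤ) := by
  induction w with
  | nil =>
    intro st h1 h2 h3 h4
    have : st = [] := stack_nil st h2 (by simpa using h4)
    subst this
    simp
  | cons s w ih =>
    intro st h1 h2 h3 h4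
    have hs : -1 ≤ s := h1 s (by simp)
    have h1' : ∀ x ∈ w, -1 ≤ x := fun x hx => h1 x (by simp [hx])
    have assemble : ∀ (st' : List ℤ) (o : ℤ), step st s = st' → out st s = o →
        -1 ≤ o → o ≤ 1 → o + (st.length : ℤ) = st'.length →
        ((∀ t ∈ run st' w, -1 ≤ t ∧ t ≤ 1) ∧
          (∀ j, -(st'.length : ℤ) ≤ ((run st' w).take j).sum) ∧
          (run st' w).sum = -(st'.length : ℤ)) →
        (∀ t ∈ run st (s :: w), -1 ≤ t ∧ t ≤ 1) ∧
          (∀ j, -(st.length : ℤ) ≤ ((run st (s :: w)).take j).sum) ∧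
          (run st (s :: w)).sum = -(st.length : ℤ) := by
      intro st' o hstep hout ho1 ho2 hlen H
      refine ⟨?_, ?_, ?_⟩
      · intro t ht
        simp only [run_cons, hstep, hout, List.mem_cons] at ht
        rcases ht with rfl | ht
        · exact ⟨ho1, ho2⟩
        · exact H.1 t ht
      · intro j
        cases j with
        | zero => simp
        | succ j =>
          have := H.2.1 j
          simp only [run_cons, hstep, hout, List.take_succ_cons, List.sum_cons]
          omega
      · have := H.2.2
        simp only [run_cons, hstep, hout, List.sum_cons]
        omega
    rcases eq_or_lt_of_le hs with hneg | hpos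
    · -- s = -1
      have hσ : 1 ≤ st.sum := by
        have := h3 1
        simp [← hneg] at this
        omega
      obtain ⟨c, st', rfl⟩ : ∃ c st', st = c :: st' := by
        cases st with
        | nil => simp at hσ
        | cons c st' => exact ⟨c, st', rfl⟩
      have hc : 1 ≤ c := h2 c (by simp)
      by_cases hc1 : c ≤ 1
      · refine assemble st' (-1) (by simp [step, ← hneg, hc1]) (by simp [out, ← hneg, hc1])
          (by omega) (by omega) (by first | omega | (simp only [List.length_cons]; push_cast; omega)) ?_
        exact ih st' (fun x hx => h1 x (by simp [hx])) (fun x hx => h2 x (by simp [hx]))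
          (fun j => by have := h3 (j + 1); simp [List.take_succ_cons, ← hneg] at this ⊢; omega)
          (by simp [← hneg] at h4 ⊢; omega)
      · refine assemble ((c - 1) :: st') 0 (by simp [step, ← hneg, hc1]) (by simp [out, ← hneg, hc1])
          (by omega) (by omega) (by first | omega | (simp only [List.length_cons]; push_cast; omega)) ?_
        refine ih ((c - 1) :: st') h1' ?_
          (fun j => by have := h3 (j + 1); simp [List.take_succ_cons, ← hneg] at this ⊢; omega)
          (by simp [← hneg] at h4 ⊢; omega)
        intro x hx
        simp only [List.mem_cons] at hx
        rcases hx with rfl | hx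
        · omega
        · exact h2 x (by simp [hx])
    · rcases eq_or_lt_of_le (show (0:ℤ) ≤ s by omega) with h0 | h1''
      · -- s = 0
        refine assemble st 0 (by simp [step, ← h0]) (by simp [out, ← h0])
          (by omega) (by omega) (by first | omega | (simp only [List.length_cons]; push_cast; omega)) ?_
        exact ih st h1' h2
          (fun j => by have := h3 (j + 1); simp [List.take_succ_cons, ← h0] at this ⊢; omega)
          (by simp [← h0] at h4 ⊢; omega)
      · -- s ≥ 1
        have hs1 : 1 ≤ s := h1''
        refine assemble (s :: st) 1 (by simp [step, hs1]; omega) (by simp [out, hs1]; omega)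
          (by omega) (by omega) (by first | omega | (simp only [List.length_cons]; push_cast; omega)) ?_
        refine ih (s :: st) h1' ?_
          (fun j => by have := h3 (j + 1); simp [List.take_succ_cons] at this ⊢; omega)
          (by simp at h4 ⊢; omega)
        intro x hx
        simp only [List.mem_cons] at hx
        rcases hx with rfl | hx
        · omega
        · exact h2 x (by simp [hx])

end PsiAux

namespace PsiAux

/-- Round trip 1: the reverse automaton recovers a Łukasiewicz path with no
flat step at positive height from its image under `run`. -/
lemma roundtrip1 (w : List ℤ) : ∀ (st : List ℤ),
    (∀ s ∈ w, -1 ≤ s) → (∀ c ∈ st, 1 ≤ c) →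
    (∀ j, 0 ≤ st.sum + (w.take j).sum) → st.sum + w.sum = 0 →
    (∀ j, w[j]? = some 0 → st.sum + (w.take j).sum = 0) →
    runRev [] (run st w).reverse = w.reverse ∧ (run st w).reverse.foldl stepRev [] = st := by
  induction w with
  | nil =>
    intro st h1 h2 h3 h4 _
    have : st = [] := stack_nil st h2 (by simpa using h4)
    subst this
    simp
  | cons s w ih =>
    intro st h1 h2 h3 h4 h5
    have hs : -1 ≤ s := h1 s (by simp)
    have h1' : ∀ x ∈ w, -1 ≤ x := fun x hx => h1 x (by simp [hx])
    have hget : ∀ j : ℕ, w[j]? = some 0 → (s :: w)[j+1]? = some 0 := by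
      intro j hj; simpa using hj
    suffices h : (runRev [] (run (step st s) w).reverse = w.reverse ∧
        (run (step st s) w).reverse.foldl stepRev [] = step st s) ∧
        outRev (step st s) (out st s) = s ∧ stepRev (step st s) (out st s) = st by
      obtain ⟨⟨E1, E2⟩, e1, e2⟩ := h
      constructor
      · rw [run_cons, List.reverse_cons, runRev_append, E1, E2]
        simp [e1]
      · rw [run_cons, List.reverse_cons, List.foldl_append, E2]
        simp [e2]
    rcases eq_or_lt_of_le hs with hneg | hpos
    · -- s = -1
      have hσ : 1 ≤ st.sum := by
        have := h3 1
        simp [← hneg] at this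
        omega
      obtain ⟨c, st', rfl⟩ : ∃ c st', st = c :: st' := by
        cases st with
        | nil => simp at hσ
        | cons c st' => exact ⟨c, st', rfl⟩
      have hc : 1 ≤ c := h2 c (by simp)
      by_cases hc1 : c ≤ 1
      · have hc' : c = 1 := by omega
        subst hc'
        have hstep : step (1 :: st') s = st' := by simp [step, ← hneg]
        have hout : out (1 :: st') s = -1 := by simp [out, ← hneg]
        rw [hstep, hout]
        refine ⟨ih st' h1' (fun x hx => h2 x (by simp [hx]))
          (fun j => by have := h3 (j+1); simp [List.take_succ_cons, ← hneg] at this ⊢; omega)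
          (by simp [← hneg] at h4 ⊢; omega)
          (fun j hj => by
            have := h5 (j+1) (hget j hj)
            simp [List.take_succ_cons, ← hneg] at this ⊢
            omega), ?_, ?_⟩
        · simp [outRev, ← hneg]
        · simp [stepRev, ← hneg]
      · have hstep : step (c :: st') s = (c-1) :: st' := by simp [step, ← hneg, hc1]
        have hout : out (c :: st') s = 0 := by simp [out, ← hneg, hc1]
        rw [hstep, hout]
        refine ⟨ih ((c-1) :: st') h1' ?_
          (fun j => by have := h3 (j+1); simp [List.take_succ_cons, ← hneg] at this ⊢; omega)
          (by simp [← hneg] at h4 ⊢; omega)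
          (fun j hj => by
            have := h5 (j+1) (hget j hj)
            simp [List.take_succ_cons, ← hneg] at this ⊢
            omega), ?_, ?_⟩
        · intro x hx
          simp only [List.mem_cons] at hx
          rcases hx with rfl | hx
          · omega
          · exact h2 x (by simp [hx])
        · simp [outRev, ← hneg]
        · have hcc : c - 1 + 1 = c := by omega
          simp [stepRev, hcc]
    · rcases eq_or_lt_of_le (show (0:ℤ) ≤ s by omega) with h0 | h1''
      · -- s = 0
        have hst : st = [] := by
          refine stack_nil st h2 ?_
          have := h5 0 (by simp [← h0])
          simpa using this
        subst hst
        have hstep : step ([] : List ℤ) s = [] := by simp [step, ← h0]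
        have hout : out ([] : List ℤ) s = 0 := by simp [out, ← h0]
        rw [hstep, hout]
        refine ⟨ih [] h1' (by simp)
          (fun j => by have := h3 (j+1); simp [List.take_succ_cons, ← h0] at this ⊢; omega)
          (by simp [← h0] at h4 ⊢; omega)
          (fun j hj => by
            have := h5 (j+1) (hget j hj)
            simp [List.take_succ_cons, ← h0] at this ⊢
            omega), ?_, ?_⟩
        · simp [outRev, ← h0]
        · simp [stepRev]
      · -- s ≥ 1
        have hs1 : 1 ≤ s := h1''
        have hstep : step st s = s :: st := by simp [step, hs1]; omega
        have hout : out st s = 1 := by simp [out, hs1]; omega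
        rw [hstep, hout]
        refine ⟨ih (s :: st) h1' ?_
          (fun j => by have := h3 (j+1); simp [List.take_succ_cons] at this ⊢; omega)
          (by simp at h4 ⊢; omega)
          (fun j hj => by
            have := h5 (j+1) (hget j hj)
            simp [List.take_succ_cons] at this ⊢
            omega), ?_, ?_⟩
        · intro x hx
          simp only [List.mem_cons] at hx
          rcases hx with rfl | hx
          · omega
          · exact h2 x (by simp [hx])
        · simp [outRev]
        · simp [stepRev]

end PsiAux

namespace PsiAux

/-- Round trip 2: the forward automaton recovers a Motzkin path from its image
under the reverse automaton. -/
lemma roundtrip2 (r : List ℤ) : ∀ (stR : List ℤ),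
    (∀ t ∈ r, -1 ≤ t ∧ t ≤ 1) → (∀ c ∈ stR, 1 ≤ c) →
    (∀ p, (r.take p).sum ≤ (stR.length : ℤ)) → r.sum = (stR.length : ℤ) →
    run [] (runRev stR r).reverse = r.reverse ∧ (runRev stR r).reverse.foldl step [] = stR := by
  induction r with
  | nil =>
    intro stR h1 h2 h3 h4
    have : stR = [] := by
      cases stR with
      | nil => rfl
      | cons c st' => simp at h4; omega
    subst this
    simp
  | cons t r ih =>
    intro stR h1 h2 h3 h4
    have ht : -1 ≤ t ∧ t ≤ 1 := h1 t (by simp)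
    have h1' : ∀ x ∈ r, -1 ≤ x ∧ x ≤ 1 := fun x hx => h1 x (by simp [hx])
    have h4' : t + r.sum = (stR.length : ℤ) := by simpa using h4
    suffices h : (run [] (runRev (stepRev stR t) r).reverse = r.reverse ∧
        (runRev (stepRev stR t) r).reverse.foldl step [] = stepRev stR t) ∧
        out (stepRev stR t) (outRev stR t) = t ∧ step (stepRev stR t) (outRev stR t) = stR by
      obtain ⟨⟨E1, E2⟩, e1, e2⟩ := h
      constructor
      · rw [runRev_cons, List.reverse_cons, run_append, E1, E2]
        simp [e1]
      · rw [runRev_cons, List.reverse_cons, List.foldl_append, E2]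
        simp [e2]
    rcases (show t = -1 ∨ t = 0 ∨ t = 1 by omega) with rfl | rfl | rfl
    · -- t = -1
      have hstep : stepRev stR (-1 : ℤ) = 1 :: stR := by simp [stepRev]
      have hout : outRev stR (-1 : ℤ) = -1 := by simp [outRev]
      rw [hstep, hout]
      refine ⟨ih (1 :: stR) h1' ?_
        (fun p => by
          have := h3 (p+1)
          simp [List.take_succ_cons, List.length_cons] at this ⊢
          push_cast
          omega)
        (by simp [List.length_cons] at h4' ⊢; push_cast; omega), ?_, ?_⟩
      · intro x hx
        simp only [List.mem_cons] at hx
        rcases hx with rfl | hx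
        · omega
        · exact h2 x hx
      · simp [out]
      · simp [step]
    · -- t = 0
      cases stR with
      | nil =>
        have hstep : stepRev ([] : List ℤ) (0 : ℤ) = [] := by simp [stepRev]
        have hout : outRev ([] : List ℤ) (0 : ℤ) = 0 := by simp [outRev]
        rw [hstep, hout]
        refine ⟨ih [] h1' (by simp)
          (fun p => by have := h3 (p+1); simp [List.take_succ_cons] at this ⊢; omega)
          (by simpa using h4'), ?_, ?_⟩
        · simp [out]
        · simp [step]
      | cons c st' =>
        have hc : 1 ≤ c := h2 c (by simp)
        have hstep : stepRev (c :: st') (0 : ℤ) = (c + 1) :: st' := by simp [stepRev]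
        have hout : outRev (c :: st') (0 : ℤ) = -1 := by simp [outRev]
        rw [hstep, hout]
        refine ⟨ih ((c+1) :: st') ?_ ?_
          (fun p => by
            have := h3 (p+1)
            simp [List.take_succ_cons, List.length_cons] at this ⊢
            omega)
          (by simp [List.length_cons] at h4' ⊢; omega), ?_, ?_⟩
        · exact h1'
        · intro x hx
          simp only [List.mem_cons] at hx
          rcases hx with rfl | hx
          · omega
          · exact h2 x (by simp [hx])
        · have : ¬ (c + 1 ≤ 1) := by omega
          simp [out, this]
        · have hcc : c + 1 - 1 = c := by omega
          have : ¬ (c + 1 ≤ 1) := by omega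
          simp [step, this, hcc]
    · -- t = 1
      have hlen : 1 ≤ stR.length := by
        have := h3 1
        simp at this
        omega
      obtain ⟨c, st', rfl⟩ : ∃ c st', stR = c :: st' := by
        cases stR with
        | nil => simp at hlen
        | cons c st' => exact ⟨c, st', rfl⟩
      have hc : 1 ≤ c := h2 c (by simp)
      have hstep : stepRev (c :: st') (1 : ℤ) = st' := by simp [stepRev]
      have hout : outRev (c :: st') (1 : ℤ) = c := by simp [outRev]
      rw [hstep, hout]
      refine ⟨ih st' h1' (fun x hx => h2 x (by simp [hx]))
        (fun p => by
          have := h3 (p+1)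
          simp [List.take_succ_cons, List.length_cons] at this ⊢
          omega)
        (by simp [List.length_cons] at h4' ⊢; omega), ?_, ?_⟩
      · have hc0 : ¬ (c = 0) := by omega
        simp [out, hc0, hc]
      · have hc0 : ¬ (c = 0) := by omega
        simp [step, hc0, hc]

end PsiAux

namespace PsiAux

/-- Backward invariant: the output of the reverse automaton, read backwards,
is a Łukasiewicz path with no flat step at positive height. -/
lemma runRev_lukas (r : List ℤ) : ∀ (stR : List ℤ),
    (∀ t ∈ r, -1 ≤ t ∧ t ≤ 1) → (∀ c ∈ stR, 1 ≤ c) →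
    (∀ p, (r.take p).sum ≤ (stR.length : ℤ)) → r.sum = (stR.length : ℤ) →
    (∀ x ∈ runRev stR r, -1 ≤ x) ∧ (runRev stR r).sum = stR.sum ∧
      (∀ q, 0 ≤ ((runRev stR r).drop q).sum) ∧
      (∀ j, (runRev stR r)[j]? = some 0 → ((runRev stR r).drop (j+1)).sum = 0) := by
  induction r with
  | nil =>
    intro stR h1 h2 h3 h4
    have : stR = [] := by
      cases stR with
      | nil => rfl
      | cons c st' => simp at h4; omega
    subst this
    simp
  | cons t r ih =>
    intro stR h1 h2 h3 h4
    have ht : -1 ≤ t ∧ t ≤ 1 := h1 t (by simp)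
    have h1' : ∀ x ∈ r, -1 ≤ x ∧ x ≤ 1 := fun x hx => h1 x (by simp [hx])
    have h4' : t + r.sum = (stR.length : ℤ) := by simpa using h4
    have hstnn : 0 ≤ stR.sum := stack_sum_nonneg stR h2
    have assemble : ∀ (stR' : List ℤ) (u : ℤ), stepRev stR t = stR' → outRev stR t = u →
        -1 ≤ u → u + stR'.sum = stR.sum → (u = 0 → stR'.sum = 0) →
        ((∀ x ∈ runRev stR' r, -1 ≤ x) ∧ (runRev stR' r).sum = stR'.sum ∧
          (∀ q, 0 ≤ ((runRev stR' r).drop q).sum) ∧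
          (∀ j, (runRev stR' r)[j]? = some 0 → ((runRev stR' r).drop (j+1)).sum = 0)) →
        (∀ x ∈ runRev stR (t :: r), -1 ≤ x) ∧ (runRev stR (t :: r)).sum = stR.sum ∧
          (∀ q, 0 ≤ ((runRev stR (t :: r)).drop q).sum) ∧
          (∀ j, (runRev stR (t :: r))[j]? = some 0 →
            ((runRev stR (t :: r)).drop (j+1)).sum = 0) := by
      intro stR' u hstep hout hu hsum huz H
      refine ⟨?_, ?_, ?_, ?_⟩
      · intro x hx
        simp only [runRev_cons, hstep, hout, List.mem_cons] at hx
        rcases hx with rfl | hx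
        · exact hu
        · exact H.1 x hx
      · simp only [runRev_cons, hstep, hout, List.sum_cons]
        rw [H.2.1]
        omega
      · intro q
        cases q with
        | zero =>
          simp only [runRev_cons, hstep, hout, List.drop_zero, List.sum_cons]
          rw [H.2.1]
          omega
        | succ q =>
          simp only [runRev_cons, hstep, hout, List.drop_succ_cons]
          exact H.2.2.1 q
      · intro j hj
        cases j with
        | zero =>
          simp only [runRev_cons, hstep, hout, List.getElem?_cons_zero, Option.some.injEq] at hj
          simp only [runRev_cons, hstep, hout, List.drop_succ_cons, List.drop_zero]
          rw [H.2.1]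
          exact huz hj
        | succ j =>
          simp only [runRev_cons, hstep, hout, List.getElem?_cons_succ] at hj
          simp only [runRev_cons, hstep, hout, List.drop_succ_cons]
          exact H.2.2.2 j hj
    rcases (show t = -1 ∨ t = 0 ∨ t = 1 by omega) with rfl | rfl | rfl
    · -- t = -1
      refine assemble (1 :: stR) (-1) (by simp [stepRev]) (by simp [outRev])
        (by omega) (by simp) (by omega) ?_
      refine ih (1 :: stR) h1' ?_
        (fun p => by
          have := h3 (p+1)
          simp [List.take_succ_cons, List.length_cons] at this ⊢
          push_cast
          omega)
        (by simp [List.length_cons] at h4' ⊢; push_cast; omega)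
      intro x hx
      simp only [List.mem_cons] at hx
      rcases hx with rfl | hx
      · omega
      · exact h2 x hx
    · -- t = 0
      cases stR with
      | nil =>
        refine assemble [] 0 (by simp [stepRev]) (by simp [outRev])
          (by omega) (by simp) (fun _ => by simp) ?_
        exact ih [] h1' (by simp)
          (fun p => by have := h3 (p+1); simp [List.take_succ_cons] at this ⊢; omega)
          (by simpa using h4')
      | cons c st' =>
        have hc : 1 ≤ c := h2 c (by simp)
        refine assemble ((c+1) :: st') (-1) (by simp [stepRev]) (by simp [outRev])
          (by omega) (by simp; ring) (by omega) ?_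
        refine ih ((c+1) :: st') h1' ?_
          (fun p => by
            have := h3 (p+1)
            simp [List.take_succ_cons, List.length_cons] at this ⊢
            omega)
          (by simp [List.length_cons] at h4' ⊢; omega)
        intro x hx
        simp only [List.mem_cons] at hx
        rcases hx with rfl | hx
        · omega
        · exact h2 x (by simp [hx])
    · -- t = 1
      have hlen : 1 ≤ stR.length := by
        have := h3 1
        simp at this
        omega
      obtain ⟨c, st', rfl⟩ : ∃ c st', stR = c :: st' := by
        cases stR with
        | nil => simp at hlen
        | cons c st' => exact ⟨c, st', rfl⟩
      have hc : 1 ≤ c := h2 c (by simp)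
      refine assemble st' c (by simp [stepRev]) (by simp [outRev])
        (by omega) (by simp) (by omega) ?_
      exact ih st' h1' (fun x hx => h2 x (by simp [hx]))
        (fun p => by
          have := h3 (p+1)
          simp [List.take_succ_cons, List.length_cons] at this ⊢
          omega)
        (by simp [List.length_cons] at h4' ⊢; omega)

end PsiAux

namespace PsiAux

lemma sum_take_reverse (l : List ℤ) (k : ℕ) :
    (l.reverse.take k).sum = (l.drop (l.length - k)).sum := by
  rcases le_or_gt k l.length with h | h
  · have hrev : l.reverse = (l.drop (l.length - k)).reverse ++ (l.take (l.length - k)).reverse := by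
      rw [← List.reverse_append, List.take_append_drop]
    rw [hrev, List.take_left' (by simp; omega), List.sum_reverse]
  · rw [List.take_of_length_le (by simp; omega), show l.length - k = 0 by omega,
      List.drop_zero, List.sum_reverse]

lemma run_append_lukas (M : List ℤ) (hM : IsLukas M) (st rest : List ℤ) :
    run st (M ++ rest) = run [] M ++ run st rest := by
  have := run_append_closed M [] st rest hM.1 (by simp) (by simpa using hM.2.1)
    (by simpa using hM.2.2)
  simpa using this

lemma runE (Ls : List (List ℤ)) : ∀ (L : List ℤ), Ls ≠ [] → (∀ M ∈ Ls, IsLukas M) →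
    run [(Ls.length : ℤ)] ((Ls.map fun N => N ++ [(-1:ℤ)]).flatten ++ L) =
      (List.intersperse [(0:ℤ)] (Ls.map (run []))).flatten ++ (-1) :: run [] L := by
  induction Ls with
  | nil => intro L h; exact absurd rfl h
  | cons M Ls ih =>
    intro L _ hLuk
    have hM : IsLukas M := hLuk M (by simp)
    have key : run [((M :: Ls).length : ℤ)] (((M :: Ls).map fun N => N ++ [(-1:ℤ)]).flatten ++ L)
        = run [] M ++
          run [((M :: Ls).length : ℤ)] ((-1) :: ((Ls.map fun N => N ++ [(-1:ℤ)]).flatten ++ L)) := by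
      rw [show ((M :: Ls).map fun N => N ++ [(-1:ℤ)]).flatten ++ L
          = M ++ ((-1) :: ((Ls.map fun N => N ++ [(-1:ℤ)]).flatten ++ L)) by simp]
      exact run_append_lukas M hM _ _
    rw [key]
    cases Ls with
    | nil =>
      have hout : out [(((1:ℕ)):ℤ)] (-1 : ℤ) = -1 := by norm_num [out]
      have hstep : step [(((1:ℕ)):ℤ)] (-1 : ℤ) = [] := by norm_num [step]
      simp only [List.length_cons, List.length_nil, Nat.zero_add, List.map_nil,
        List.flatten_nil, List.nil_append, run_cons]
      rw [hout, hstep]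
      simp [List.intersperse]
    | cons M' Ls' =>
      have hlen : (2:ℤ) ≤ ((M :: M' :: Ls').length : ℤ) := by
        simp only [List.length_cons]
        push_cast
        omega
      have hne2 : ¬ (((M :: M' :: Ls').length : ℤ) ≤ 1) := by
        simp only [List.length_cons]; push_cast; omega
      have hout : out [((M :: M' :: Ls').length : ℤ)] (-1 : ℤ) = 0 := by
        simp only [out]
        rw [if_neg (by norm_num), if_neg (by norm_num)]
        show (if ((M :: M' :: Ls').length : ℤ) ≤ 1 then (-1:ℤ) else 0) = 0
        rw [if_neg hne2]
      have hlen' : ((M :: M' :: Ls').length : ℤ) - 1 = ((M' :: Ls').length : ℤ) := by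
        simp only [List.length_cons]; push_cast; ring
      have hstep : step [((M :: M' :: Ls').length : ℤ)] (-1 : ℤ)
          = [((M' :: Ls').length : ℤ)] := by
        simp only [step]
        rw [if_neg (by norm_num), if_neg (by norm_num)]
        show (if ((M :: M' :: Ls').length : ℤ) ≤ 1 then ([] : List ℤ)
          else [((M :: M' :: Ls').length : ℤ) - 1]) = [((M' :: Ls').length : ℤ)]
        rw [if_neg hne2, hlen']
      rw [run_cons, hout, hstep, ih L (by simp) (fun N hN => hLuk N (by simp [hN]))]
      simp [List.intersperse_cons_cons]

end PsiAux

open PsiAux in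
theorem psi_bijection :
    ∃ ψ : List ℤ → List ℤ,
      ψ [] = [] ∧
      (∀ L : List ℤ, IsLukas L → ψ (0 :: L) = 0 :: ψ L) ∧
      (∀ (Ls : List (List ℤ)) (L : List ℤ), Ls ≠ [] →
        (∀ M ∈ Ls, IsLukas M) → IsLukas L →
        ψ ((Ls.length : ℤ) :: ((Ls.map fun M => M ++ [(-1 : ℤ)]).flatten ++ L)) =
          1 :: ((List.intersperse [(0 : ℤ)] (Ls.map ψ)).flatten ++ (-1 : ℤ) :: ψ L)) ∧
      (∀ L : List ℤ, IsLukas L → (ψ L).length = L.length) ∧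
      (∀ n : ℕ, Set.BijOn ψ
        {w : List ℤ | IsLukas w ∧ NoFlatAtPosHeight w ∧ w.length = n}
        {w : List ℤ | IsMotzkin w ∧ w.length = n}) := by
  refine ⟨run [], rfl, ?_, ?_, ?_, ?_⟩
  · intro L _
    simp [run_cons, out, step]
  · intro Ls L hne hLs _
    have hlen1 : 1 ≤ (Ls.length : ℤ) := by
      have : Ls.length ≠ 0 := by simpa [List.length_eq_zero_iff] using hne
      push_cast
      omega
    have hne0 : ¬ ((Ls.length : ℤ) = 0) := by omega
    have hout : out [] ((Ls.length : ℤ)) = 1 := by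
      simp only [out]
      rw [if_neg hne0, if_pos hlen1]
    have hstep : step [] ((Ls.length : ℤ)) = [(Ls.length : ℤ)] := by
      simp only [step]
      rw [if_neg hne0, if_pos hlen1]
    rw [run_cons, hout, hstep, runE Ls L hne hLs]
  · intro L _
    exact run_length L []
  · intro n
    refine ⟨?_, ?_, ?_⟩
    · -- MapsTo
      rintro w ⟨⟨hw1, hw2, hw3⟩, _, hlen⟩
      have H := run_motzkin w [] hw1 (by simp) (by simpa using hw2) (by simpa using hw3)
      refine ⟨⟨⟨fun s hs => (H.1 s hs).1, fun j => by have := H.2.1 j; simpa using this,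
        by simpa using H.2.2⟩, fun s hs => (H.1 s hs).2⟩, by rw [run_length]; exact hlen⟩
    · -- InjOn
      rintro w1 ⟨⟨h11, h12, h13⟩, hNF1, _⟩ w2 ⟨⟨h21, h22, h23⟩, hNF2, _⟩ heq
      have R1 := roundtrip1 w1 [] h11 (by simp) (by simpa using h12) (by simpa using h13)
        (fun j hj => by simpa using hNF1 j hj)
      have R2 := roundtrip1 w2 [] h21 (by simp) (by simpa using h22) (by simpa using h23)
        (fun j hj => by simpa using hNF2 j hj)
      have : w1.reverse = w2.reverse := by
        rw [← R1.1, ← R2.1, heq]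
      simpa using congrArg List.reverse this
    · -- SurjOn
      rintro m ⟨⟨⟨hm1, hm2, hm3⟩, hm4⟩, hlen⟩
      have hr1 : ∀ t ∈ m.reverse, -1 ≤ t ∧ t ≤ 1 := fun t htm =>
        ⟨hm1 t (List.mem_reverse.mp htm), hm4 t (List.mem_reverse.mp htm)⟩
      have hr3 : ∀ p, ((m.reverse.take p).sum) ≤ ((([] : List ℤ).length : ℤ)) := by
        intro p
        rw [sum_take_reverse]
        have h1 := hm2 (m.length - p)
        have h2 := List.sum_take_add_sum_drop m (m.length - p)
        simp only [List.length_nil, Nat.cast_zero]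
        omega
      have hr4 : m.reverse.sum = ((([] : List ℤ).length : ℤ)) := by
        simpa [List.sum_reverse] using hm3
      have B := runRev_lukas m.reverse [] hr1 (by simp) hr3 hr4
      have R := roundtrip2 m.reverse [] hr1 (by simp) hr3 hr4
      set y := runRev [] m.reverse with hy
      have hylen : y.length = m.length := by rw [hy, runRev_length, List.length_reverse]
      refine ⟨y.reverse, ⟨⟨fun s hs => B.1 s (List.mem_reverse.mp hs), ?_, ?_⟩, ?_, ?_⟩, ?_⟩
      · intro k
        rw [sum_take_reverse]
        exact B.2.2.1 _
      · rw [List.sum_reverse, B.2.1]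
        simp
      · -- NoFlatAtPosHeight
        intro j hj
        have hjlen : j < y.length := by
          by_contra hcon
          rw [List.getElem?_eq_none_iff.mpr (by simp; omega)] at hj
          cases hj
        have hjy : y[y.length - 1 - j]? = some 0 := by
          rw [← List.getElem?_reverse (by simpa using hjlen)]
          exact hj
        have := B.2.2.2 (y.length - 1 - j) hjy
        rw [sum_take_reverse, show y.length - j = y.length - 1 - j + 1 by omega]
        exact this
      · rw [List.length_reverse, hylen]
        exact hlen
      · rw [← List.reverse_reverse m]
        exact R.1
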